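/- arXiv:1003.2301 — 3 statements merged into one kernel-verified Lean document; each statement's English description precedes it below -/
import Mathlib

section
/- Let I and J be two-sided ideals of R. Then E(n,IJ) is contained in the commutator subgroup [E_I, E_J] (the subgroup generated by all commutators aba⁻¹b⁻¹ with a ∈ E_I, b ∈ E_J). In particular, E(n,I²) ⊆ E_I. -/
/- Common definitions: linear groups over an associative ring with identity,
transvections, elementary subgroups, congruence subgroups, and the
stability-theoretic properties of rings, following V. M. Petechuk,
"Stability of rings". Throughout, `GL(n,R)` is realized as the group of
units `(Matrix (Fin n) (Fin n) R)ˣ`. -/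

open Matrix

section Defs

variable (n : ℕ) (R : Type*) [Ring R]

/-- A transvection: an invertible matrix of the form `1 + r·e_{ij}` with `i ≠ j`. -/
def IsTransvection {n : ℕ} {R : Type*} [Ring R] (g : (Matrix (Fin n) (Fin n) R)ˣ) : Prop :=
  ∃ i j : Fin n, i ≠ j ∧ ∃ r : R, g.val = 1 + single i j r

/-- `E_X`: the subgroup of `GL(n,R)` generated by the transvections `t_{ij}(x)`, `x ∈ X`,
`i ≠ j`. -/
def Esub (X : Set R) : Subgroup (Matrix (Fin n) (Fin n) R)ˣ :=
  Subgroup.closure {g | ∃ i j : Fin n, i ≠ j ∧ ∃ x ∈ X, g.val = 1 + single i j x}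

/-- `E(n,R) = E_R`. -/
def En : Subgroup (Matrix (Fin n) (Fin n) R)ˣ := Esub n R Set.univ

/-- `E(n,I)`: the normal closure of `E_I` in `E(n,R)`. -/
def EnI {R : Type*} [Ring R] (I : TwoSidedIdeal R) : Subgroup (Matrix (Fin n) (Fin n) R)ˣ :=
  Subgroup.closure {g | ∃ h ∈ En n R, ∃ e ∈ Esub n R (I : Set R), g = h * e * h⁻¹}

/-- `Λ_I`: entrywise reduction `GL(n,R) → GL(n, R/I)`. -/
def lamI {R : Type*} [Ring R] (I : TwoSidedIdeal R) :
    (Matrix (Fin n) (Fin n) R)ˣ →* (Matrix (Fin n) (Fin n) I.ringCon.Quotient)ˣ :=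
  Units.map ((RingCon.mk' I.ringCon).mapMatrix.toMonoidHom)

/-- `C_I = ker Λ_I`: the principal congruence subgroup of level `I`. -/
def CIsub {R : Type*} [Ring R] (I : TwoSidedIdeal R) : Subgroup (Matrix (Fin n) (Fin n) R)ˣ :=
  (lamI n I).ker

/-- `C(n,I) = Λ_I⁻¹(ξGL(n,R/I))`. -/
def CnI {R : Type*} [Ring R] (I : TwoSidedIdeal R) : Subgroup (Matrix (Fin n) (Fin n) R)ˣ :=
  (Subgroup.center _).comap (lamI n I)

/-- `R` is a commutator ring: `[C(n,I), E(n,R)] = E(n,I) ⊴ GL(n,R)` for every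
two-sided ideal `I`. -/
def IsCommutatorRing : Prop :=
  ∀ I : TwoSidedIdeal R, ⁅CnI n I, En n R⁆ = EnI n I ∧ (EnI n I).Normal

/-- Iterated commutator subgroup `[H, K, K, …, K]` (`k` copies of `K`). -/
def iterCommutator {G : Type*} [Group G] (H K : Subgroup G) : ℕ → Subgroup G
  | 0 => H
  | m + 1 => ⁅iterCommutator H K m, K⁆

/-- `R` is weakly-commutator of length `k`:
`[C(n,I), E(n,R), …, E(n,R)] = E(n,I) ⊴ GL(n,R)` (`k` copies of `E(n,R)`)
simultaneously for every two-sided ideal `I`. -/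
def IsWeaklyCommutatorRing (k : ℕ) : Prop :=
  0 < k ∧ ∀ I : TwoSidedIdeal R,
    iterCommutator (CnI n I) (En n R) k = EnI n I ∧ (EnI n I).Normal

/-- `R` is a normal ring: every subgroup invariant under conjugation by `E(n,R)` is
squeezed between `E(n,I)` and `C(n,I)` for some two-sided ideal `I`. -/
def IsNormalRing : Prop :=
  ∀ G : Subgroup (Matrix (Fin n) (Fin n) R)ˣ,
    (∀ e ∈ En n R, ∀ g ∈ G, e * g * e⁻¹ ∈ G) →
    ∃ I : TwoSidedIdeal R, EnI n I ≤ G ∧ G ≤ CnI n I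

/-- `R` is partially normal: every subgroup invariant under conjugation by `E(n,R)`
containing no non-identity transvection is contained in the center of `GL(n,R)`. -/
def IsPartiallyNormalRing : Prop :=
  ∀ N : Subgroup (Matrix (Fin n) (Fin n) R)ˣ,
    (∀ e ∈ En n R, ∀ g ∈ N, e * g * e⁻¹ ∈ N) →
    (∀ g ∈ N, IsTransvection g → g = 1) →
    N ≤ Subgroup.center _

/-- `R` is stable: both commutator and normal. -/
def IsStableRing : Prop := IsCommutatorRing n R ∧ IsNormalRing n R

/-- The annihilator `Ann I = {r | rI = Ir = 0}` of a two-sided ideal, as a two-sided ideal. -/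
def annIdeal {R : Type*} [Ring R] (I : TwoSidedIdeal R) : TwoSidedIdeal R :=
  TwoSidedIdeal.mk' {r : R | ∀ a ∈ I, r * a = 0 ∧ a * r = 0}
    (fun a _ => ⟨zero_mul a, mul_zero a⟩)
    (fun {x y} hx hy a ha => by
      refine ⟨?_, ?_⟩
      · rw [add_mul, (hx a ha).1, (hy a ha).1, add_zero]
      · rw [mul_add, (hx a ha).2, (hy a ha).2, add_zero])
    (fun {x} hx a ha => by
      refine ⟨?_, ?_⟩
      · rw [neg_mul, (hx a ha).1, neg_zero]
      · rw [mul_neg, (hx a ha).2, neg_zero])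
    (fun {x y} hy a ha => by
      refine ⟨?_, ?_⟩
      · rw [mul_assoc, (hy a ha).1, mul_zero]
      · rw [← mul_assoc]
        exact (hy (a * x) (I.mul_mem_right a x ha)).2)
    (fun {x y} hx a ha => by
      refine ⟨?_, ?_⟩
      · rw [mul_assoc]
        exact (hx (y * a) (I.mul_mem_left y a ha)).1
      · rw [← mul_assoc, (hx a ha).2, zero_mul])

end Defs

section Statement1Aux

namespace Petechuk

open Matrix Subgroup

variable {n : ℕ} {R : Type*} [Ring R]

lemma std_mul (i j k l : Fin n) (x y : R) :
    (single i j x : Matrix (Fin n) (Fin n) R) * single k l y =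
      if j = k then single i l (x * y) else 0 := by
  split_ifs with h
  · subst h; rw [single_mul_single_same]
  · exact single_mul_single_of_ne x i j k h y

lemma std_neg (i j : Fin n) (x : R) :
    (single i j (-x) : Matrix (Fin n) (Fin n) R) = -single i j x := by
  rw [show (-x) = (-1 : R) • x from (neg_one_smul R x).symm, ← smul_single,
    neg_one_smul]

/-- The matrix of a transvection. -/
def tm (i j : Fin n) (r : R) : Matrix (Fin n) (Fin n) R := 1 + single i j r

lemma tm_mul_inv {i j : Fin n} (hij : i ≠ j) (r : R) :
    tm i j r * tm i j (-r) = 1 := by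
  simp only [tm, mul_add, add_mul, one_mul, mul_one, std_mul, std_neg, neg_mul, mul_neg,
    neg_neg, if_neg (Ne.symm hij), Matrix.single_zero, mul_zero, zero_mul, add_zero,
    zero_add, neg_zero]
  abel

/-- A transvection as a unit. -/
def Tu {i j : Fin n} (hij : i ≠ j) (r : R) : (Matrix (Fin n) (Fin n) R)ˣ where
  val := tm i j r
  inv := tm i j (-r)
  val_inv := tm_mul_inv hij r
  inv_val := by simpa using tm_mul_inv hij (-r)

@[simp] lemma Tu_val {i j : Fin n} (hij : i ≠ j) (r : R) :
    (Tu hij r).val = tm i j r := rfl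

lemma Tu_inv {i j : Fin n} (hij : i ≠ j) (r : R) :
    (Tu hij r)⁻¹ = Tu hij (-r) := Units.ext rfl

lemma Tu_zero {i j : Fin n} (hij : i ≠ j) : (Tu hij (0 : R)) = 1 :=
  Units.ext <| by show tm i j (0 : R) = 1; simp [tm]

/-- The Suslin–Vaserstein generator `z_{ij}(a,c) = t_{ji}(c) t_{ij}(a) t_{ji}(c)⁻¹`. -/
def zel {i j : Fin n} (hij : i ≠ j) (a c : R) : (Matrix (Fin n) (Fin n) R)ˣ :=
  Tu hij.symm c * Tu hij a * (Tu hij.symm c)⁻¹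


section Identities

/-- Workhorse simp set note: each identity is proved by reducing to matrix algebra. -/

lemma zel_zero {i j : Fin n} (hij : i ≠ j) (c : R) : zel hij 0 c = 1 := by
  simp [zel, Tu_zero]

lemma zel_add {i j : Fin n} (hij : i ≠ j) (x y c : R) :
    zel hij (x + y) c = zel hij x c * zel hij y c := by
  simp only [zel, Tu_inv]
  refine Units.ext ?_
  simp only [Units.val_mul, Tu_val]
  simp [tm, mul_add, add_mul, std_mul, std_neg, Matrix.single_add, mul_assoc,
    neg_mul, mul_neg, hij, Ne.symm hij]
  try abel

lemma zel_neg {i j : Fin n} (hij : i ≠ j) (x c : R) :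
    zel hij (-x) c = (zel hij x c)⁻¹ :=
  eq_inv_of_mul_eq_one_left (by rw [← zel_add, neg_add_cancel, zel_zero])

lemma IDmerge {i j : Fin n} (hij : i ≠ j) (hji : j ≠ i) (s a c : R) :
    Tu hji s * zel hij a c * (Tu hji s)⁻¹ = zel hij a (s + c) := by
  simp only [zel, Tu_inv]
  refine Units.ext ?_
  simp only [Units.val_mul, Tu_val]
  simp [tm, mul_add, add_mul, std_mul, std_neg, Matrix.single_add, mul_assoc,
    neg_mul, mul_neg, hij, hji]
  try abel

lemma IDC {p q i j : Fin n} (hpq : p ≠ q) (hij : i ≠ j) (hpi : p ≠ i) (hpj : p ≠ j)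
    (hqi : q ≠ i) (hqj : q ≠ j) (s a c : R) :
    Tu hpq s * zel hij a c * (Tu hpq s)⁻¹ = zel hij a c := by
  simp only [zel, Tu_inv]
  refine Units.ext ?_
  simp only [Units.val_mul, Tu_val]
  simp [tm, mul_add, add_mul, std_mul, std_neg, Matrix.single_add, mul_assoc,
    neg_mul, mul_neg, hij, Ne.symm hij, hpq, Ne.symm hpq, hpi, Ne.symm hpi,
    hpj, Ne.symm hpj, hqi, Ne.symm hqi, hqj, Ne.symm hqj]
  try abel

lemma ID3 {p i j : Fin n} (hij : i ≠ j) (hpi : p ≠ i) (hpj : p ≠ j) (s a c : R) :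
    Tu hpi s * zel hij a c * (Tu hpi s)⁻¹ =
      Tu hpj (s * a) * Tu hpi (-(s * a * c)) * zel hij a c := by
  simp only [zel, Tu_inv]
  refine Units.ext ?_
  simp only [Units.val_mul, Tu_val]
  simp [tm, mul_add, add_mul, std_mul, std_neg, Matrix.single_add, mul_assoc,
    neg_mul, mul_neg, hij, Ne.symm hij, hpi, Ne.symm hpi, hpj, Ne.symm hpj]
  try abel

lemma ID4 {p i j : Fin n} (hij : i ≠ j) (hpi : p ≠ i) (hpj : p ≠ j) (s a c : R) :
    Tu hpj s * zel hij a c * (Tu hpj s)⁻¹ =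
      zel hij a c * Tu hpj (s * c * a) * Tu hpi (-(s * c * a * c)) := by
  simp only [zel, Tu_inv]
  refine Units.ext ?_
  simp only [Units.val_mul, Tu_val]
  simp [tm, mul_add, add_mul, std_mul, std_neg, Matrix.single_add, mul_assoc,
    neg_mul, mul_neg, hij, Ne.symm hij, hpi, Ne.symm hpi, hpj, Ne.symm hpj]
  try abel

lemma ID5 {i j q : Fin n} (hij : i ≠ j) (hiq : i ≠ q) (hjq : j ≠ q) (s a c : R) :
    Tu hiq s * zel hij a c * (Tu hiq s)⁻¹ =
      zel hij a c * Tu hjq (c * a * c * s) * Tu hiq (a * c * s) := by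
  simp only [zel, Tu_inv]
  refine Units.ext ?_
  simp only [Units.val_mul, Tu_val]
  simp [tm, mul_add, add_mul, std_mul, std_neg, Matrix.single_add, mul_assoc,
    neg_mul, mul_neg, hij, Ne.symm hij, hiq, Ne.symm hiq, hjq, Ne.symm hjq]
  try abel

lemma ID6 {i j q : Fin n} (hij : i ≠ j) (hiq : i ≠ q) (hjq : j ≠ q) (s a c : R) :
    Tu hjq s * zel hij a c * (Tu hjq s)⁻¹ =
      zel hij a c * Tu hjq (-(c * a * s)) * Tu hiq (-(a * s)) := by
  simp only [zel, Tu_inv]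
  refine Units.ext ?_
  simp only [Units.val_mul, Tu_val]
  simp [tm, mul_add, add_mul, std_mul, std_neg, Matrix.single_add, mul_assoc,
    neg_mul, mul_neg, hij, Ne.symm hij, hiq, Ne.symm hiq, hjq, Ne.symm hjq]
  try abel

set_option maxHeartbeats 800000 in
lemma H2 {i j h : Fin n} (hij : i ≠ j) (hih : i ≠ h) (hjh : j ≠ h) (hji : j ≠ i)
    (hhi : h ≠ i) (u v y : R) :
    (Tu hih u * Tu hjh v) * Tu hhi y * (Tu hih u * Tu hjh v)⁻¹ =
      Tu hji (v * y) * Tu hjh (-(v * y * u)) * zel hhi y u := by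
  simp only [zel, Tu_inv, _root_.mul_inv_rev]
  refine Units.ext ?_
  simp only [Units.val_mul, Tu_val]
  simp [tm, mul_add, add_mul, std_mul, std_neg, Matrix.single_add, mul_assoc,
    neg_mul, mul_neg, hij, Ne.symm hij, hih, Ne.symm hih, hjh, Ne.symm hjh]
  try abel

set_option maxHeartbeats 800000 in
lemma H3 {i j h : Fin n} (hij : i ≠ j) (hih : i ≠ h) (hjh : j ≠ h)
    (hhj : h ≠ j) (u v w : R) :
    (Tu hih u * Tu hjh v) * Tu hhj w * (Tu hih u * Tu hjh v)⁻¹ =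
      Tu hij (u * w) * Tu hih (-(u * w * v)) * zel hhj w v := by
  simp only [zel, Tu_inv, _root_.mul_inv_rev]
  refine Units.ext ?_
  simp only [Units.val_mul, Tu_val]
  simp [tm, mul_add, add_mul, std_mul, std_neg, Matrix.single_add, mul_assoc,
    neg_mul, mul_neg, hij, Ne.symm hij, hih, Ne.symm hih, hjh, Ne.symm hjh]
  try abel

set_option maxHeartbeats 1600000 in
lemma H1 {i j h : Fin n} (hij : i ≠ j) (hih : i ≠ h) (hjh : j ≠ h) (s a c : R) :
    Tu hij s * zel hij a c * (Tu hij s)⁻¹ =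
      ((Tu hih (1 + s * c) * Tu hjh c) * Tu (show h ≠ i from Ne.symm hih) (-(a * c)) *
          (Tu hih (1 + s * c) * Tu hjh c)⁻¹) *
        ((Tu hih (1 + s * c) * Tu hjh c) * Tu (show h ≠ j from Ne.symm hjh) (a + a * c * s) *
          (Tu hih (1 + s * c) * Tu hjh c)⁻¹) *
        (Tu (show h ≠ j from Ne.symm hjh) (a + a * c * s))⁻¹ *
        (Tu (show h ≠ i from Ne.symm hih) (-(a * c)))⁻¹ := by
  simp only [zel, Tu_inv, _root_.mul_inv_rev]
  refine Units.ext ?_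
  simp only [Units.val_mul, Tu_val]
  simp [tm, mul_add, add_mul, std_mul, std_neg, Matrix.single_add, mul_assoc,
    neg_mul, mul_neg, neg_add_rev, hij, Ne.symm hij, hih, Ne.symm hih, hjh, Ne.symm hjh]
  try abel

set_option maxHeartbeats 800000 in
lemma D1 {i j h : Fin n} (hij : i ≠ j) (hih : i ≠ h) (hjh : j ≠ h) (a b c : R) :
    zel hij (a * b) c =
      (Tu hjh (c * a) * Tu hih a) * (Tu (show h ≠ j from Ne.symm hjh) b *
          Tu (show h ≠ i from Ne.symm hih) (-(b * c))) *
        (Tu hjh (c * a) * Tu hih a)⁻¹ *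
        (Tu (show h ≠ j from Ne.symm hjh) b * Tu (show h ≠ i from Ne.symm hih) (-(b * c)))⁻¹ := by
  simp only [zel, Tu_inv, _root_.mul_inv_rev]
  refine Units.ext ?_
  simp only [Units.val_mul, Tu_val]
  simp [tm, mul_add, add_mul, std_mul, std_neg, Matrix.single_add, mul_assoc,
    neg_mul, mul_neg, neg_add_rev, hij, Ne.symm hij, hih, Ne.symm hih, hjh, Ne.symm hjh]
  try abel

end Identities


section Groups

open Subgroup

lemma exists_third (hn : 3 ≤ n) (i j : Fin n) : ∃ k : Fin n, k ≠ i ∧ k ≠ j := by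
  by_contra hcon
  push_neg at hcon
  have hsub : (Finset.univ : Finset (Fin n)) ⊆ {i, j} := by
    intro k _
    by_cases hk : k = i
    · simp [hk]
    · simp [hcon k hk]
  have h1 := Finset.card_le_card hsub
  have h2 : ({i, j} : Finset (Fin n)).card ≤ 2 :=
    (Finset.card_insert_le _ _).trans (by simp)
  rw [Finset.card_univ, Fintype.card_fin] at h1
  omega

/-- The generating set of Suslin–Vaserstein generators of level `K`. -/
def Zset (n : ℕ) (K : TwoSidedIdeal R) : Set (Matrix (Fin n) (Fin n) R)ˣ :=
  {g | ∃ (i j : Fin n) (hij : i ≠ j) (a : R), a ∈ K ∧ ∃ c : R, g = zel hij a c}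

/-- The subgroup generated by the Suslin–Vaserstein generators of level `K`. -/
def FF (n : ℕ) (K : TwoSidedIdeal R) : Subgroup (Matrix (Fin n) (Fin n) R)ˣ :=
  Subgroup.closure (Zset n K)

lemma zel_mem_FF (K : TwoSidedIdeal R) {i j : Fin n} (hij : i ≠ j) {a : R} (ha : a ∈ K)
    (c : R) : zel hij a c ∈ FF n K :=
  Subgroup.subset_closure ⟨i, j, hij, a, ha, c, rfl⟩

lemma Tu_mem_FF (K : TwoSidedIdeal R) {i j : Fin n} (hij : i ≠ j) {a : R} (ha : a ∈ K) :
    Tu hij a ∈ FF n K := by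
  have h1 : Tu hij a = zel hij a 0 := by simp [zel, Tu_zero]
  rw [h1]
  exact zel_mem_FF K hij ha 0

lemma Tu_mem_Esub {X : Set R} {i j : Fin n} (hij : i ≠ j) {x : R} (hx : x ∈ X) :
    Tu hij x ∈ Esub n R X :=
  Subgroup.subset_closure ⟨i, j, hij, x, hx, rfl⟩

lemma conj_zel_mem (hn : 3 ≤ n) (K : TwoSidedIdeal R) {p q : Fin n} (hpq : p ≠ q) (s : R)
    {i j : Fin n} (hij : i ≠ j) {a : R} (ha : a ∈ K) (c : R) :
    Tu hpq s * zel hij a c * (Tu hpq s)⁻¹ ∈ FF n K := by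
  by_cases hqi : q = i
  · subst hqi
    by_cases hpj : p = j
    · subst hpj
      rw [IDmerge hij hpq]
      exact zel_mem_FF K hij ha (s + c)
    · rw [ID3 hij hpq hpj]
      exact mul_mem (mul_mem (Tu_mem_FF K hpj (K.mul_mem_left s a ha))
        (Tu_mem_FF K hpq (neg_mem (K.mul_mem_right _ c (K.mul_mem_left s a ha)))))
        (zel_mem_FF K hij ha c)
  · by_cases hqj : q = j
    · subst hqj
      by_cases hpi : p = i
      · subst hpi
        obtain ⟨h, hhi, hhj⟩ := exists_third hn p q
        have hih : p ≠ h := Ne.symm hhi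
        have hjh : q ≠ h := Ne.symm hhj
        rw [H1 hpq hih hjh s a c, H2 hpq hih hjh (Ne.symm hpq) hhi,
          H3 hpq hih hjh hhj]
        have hac : a * c ∈ K := K.mul_mem_right a c ha
        have hnac : -(a * c) ∈ K := neg_mem hac
        have hw : a + a * c * s ∈ K := K.add_mem ha (K.mul_mem_right _ s hac)
        refine mul_mem (mul_mem (mul_mem ?_ ?_) (inv_mem ?_)) (inv_mem ?_)
        · exact mul_mem (mul_mem (Tu_mem_FF K (Ne.symm hpq) (K.mul_mem_left c _ hnac))
            (Tu_mem_FF K hjh (neg_mem (K.mul_mem_right _ _ (K.mul_mem_left c _ hnac)))))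
            (zel_mem_FF K hhi hnac _)
        · exact mul_mem (mul_mem (Tu_mem_FF K hpq (K.mul_mem_left _ _ hw))
            (Tu_mem_FF K hih (neg_mem (K.mul_mem_right _ _ (K.mul_mem_left _ _ hw)))))
            (zel_mem_FF K hhj hw _)
        · exact Tu_mem_FF K hhj hw
        · exact Tu_mem_FF K hhi hnac
      · rw [ID4 hij hpi hpq]
        exact mul_mem (mul_mem (zel_mem_FF K hij ha c)
          (Tu_mem_FF K hpq (K.mul_mem_left (s * c) a ha)))
          (Tu_mem_FF K hpi (neg_mem (K.mul_mem_right _ c (K.mul_mem_left (s * c) a ha))))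
    · have hiq : i ≠ q := fun hh => hqi hh.symm
      have hjq : j ≠ q := fun hh => hqj hh.symm
      by_cases hpi : p = i
      · subst hpi
        rw [ID5 hij hpq hjq]
        exact mul_mem (mul_mem (zel_mem_FF K hij ha c)
          (Tu_mem_FF K hjq (K.mul_mem_right _ s (K.mul_mem_right _ c (K.mul_mem_left c a ha)))))
          (Tu_mem_FF K hpq (K.mul_mem_right _ s (K.mul_mem_right a c ha)))
      · by_cases hpj : p = j
        · subst hpj
          rw [ID6 hij hiq hpq]
          exact mul_mem (mul_mem (zel_mem_FF K hij ha c)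
            (Tu_mem_FF K hpq (neg_mem (K.mul_mem_right _ s (K.mul_mem_left c a ha)))))
            (Tu_mem_FF K hiq (neg_mem (K.mul_mem_right a s ha)))
        · rw [IDC hpq hij hpi hpj hqi hqj]
          exact zel_mem_FF K hij ha c

lemma conj_FF (hn : 3 ≤ n) (K : TwoSidedIdeal R) {p q : Fin n} (hpq : p ≠ q) (s : R)
    {f : (Matrix (Fin n) (Fin n) R)ˣ} (hf : f ∈ FF n K) :
    Tu hpq s * f * (Tu hpq s)⁻¹ ∈ FF n K := by
  have hmap : (FF n K).map (MulAut.conj (Tu hpq s)).toMonoidHom ≤ FF n K := by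
    rw [FF, MonoidHom.map_closure]
    refine (Subgroup.closure_le _).mpr ?_
    rintro g' ⟨g, hg, rfl⟩
    obtain ⟨i, j, hij, a, ha, c, rfl⟩ := hg
    simpa [FF] using conj_zel_mem hn K hpq s hij ha c
  exact hmap ⟨f, hf, rfl⟩

lemma En_le_normalizer (hn : 3 ≤ n) (K : TwoSidedIdeal R) :
    En n R ≤ Subgroup.normalizer (FF n K : Set _) := by
  rw [En, Esub]
  refine (Subgroup.closure_le _).mpr ?_
  rintro g ⟨i, j, hij, x, -, hval⟩
  have hg : g = Tu hij x := Units.ext hval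
  rw [hg, SetLike.mem_coe, Subgroup.mem_normalizer_iff]
  refine fun f => ⟨fun hf => conj_FF hn K hij x hf, fun hf => ?_⟩
  have h2 := conj_FF hn K hij (-x) hf
  rw [← Tu_inv] at h2
  simpa [inv_inv, mul_assoc] using h2

lemma Esub_le_FF (K : TwoSidedIdeal R) : Esub n R (K : Set R) ≤ FF n K := by
  rw [Esub]
  refine (Subgroup.closure_le _).mpr ?_
  rintro g ⟨i, j, hij, x, hx, hval⟩
  have hg : g = Tu hij x := Units.ext hval
  rw [hg]
  exact Tu_mem_FF K hij hx

lemma EnI_le_FF (hn : 3 ≤ n) (K : TwoSidedIdeal R) : EnI n K ≤ FF n K := by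
  rw [EnI]
  refine (Subgroup.closure_le _).mpr ?_
  rintro g ⟨h, hh, e, he, rfl⟩
  exact ((Subgroup.mem_normalizer_iff.mp (En_le_normalizer hn K hh)) e).mp (Esub_le_FF K he)

lemma mem_addclosure {I J : TwoSidedIdeal R} {x : R}
    (hx : x ∈ TwoSidedIdeal.span {x : R | ∃ a ∈ I, ∃ b ∈ J, x = a * b}) :
    x ∈ AddSubgroup.closure {x : R | ∃ a ∈ I, ∃ b ∈ J, x = a * b} := by
  rw [← TwoSidedIdeal.mem_span_iff_mem_addSubgroup_closure_absorbing]
  · exact hx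
  · rintro x y ⟨a, ha, b, hb, rfl⟩
    exact ⟨x * a, I.mul_mem_left x a ha, b, hb, by rw [mul_assoc]⟩
  · rintro y x ⟨a, ha, b, hb, rfl⟩
    exact ⟨a, ha, b * x, J.mul_mem_right b x hb, by rw [mul_assoc]⟩

lemma zel_mem_comm (hn : 3 ≤ n) (I J : TwoSidedIdeal R) {i j : Fin n} (hij : i ≠ j)
    {x : R} (hx : x ∈ TwoSidedIdeal.span {x : R | ∃ a ∈ I, ∃ b ∈ J, x = a * b}) (c : R) :
    zel hij x c ∈ ⁅Esub n R (I : Set R), Esub n R (J : Set R)⁆ := by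
  have hx' := mem_addclosure hx
  refine AddSubgroup.closure_induction ?_ ?_ ?_ ?_ hx'
  · rintro y ⟨a, ha, b, hb, rfl⟩
    obtain ⟨h, hhi, hhj⟩ := exists_third hn i j
    rw [D1 hij (Ne.symm hhi) (Ne.symm hhj), ← commutatorElement_def]
    refine Subgroup.commutator_mem_commutator ?_ ?_
    · exact mul_mem (Tu_mem_Esub (Ne.symm hhj) (I.mul_mem_left c a ha))
        (Tu_mem_Esub (Ne.symm hhi) ha)
    · exact mul_mem (Tu_mem_Esub hhj hb)
        (Tu_mem_Esub hhi (neg_mem (J.mul_mem_right b c hb)))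
  · rw [zel_zero]; exact one_mem _
  · intro y z _ _ hy' hz'
    rw [zel_add]; exact mul_mem hy' hz'
  · intro y _ hy'
    rw [zel_neg]; exact inv_mem hy'

lemma FF_le_comm (hn : 3 ≤ n) (I J : TwoSidedIdeal R) :
    FF n (TwoSidedIdeal.span {x : R | ∃ a ∈ I, ∃ b ∈ J, x = a * b}) ≤
      ⁅Esub n R (I : Set R), Esub n R (J : Set R)⁆ := by
  refine (Subgroup.closure_le _).mpr ?_
  rintro g ⟨i, j, hij, a, ha, c, rfl⟩
  exact zel_mem_comm hn I J hij ha c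

lemma main (hn : 3 ≤ n) (I J : TwoSidedIdeal R) :
    EnI n (TwoSidedIdeal.span {x : R | ∃ a ∈ I, ∃ b ∈ J, x = a * b}) ≤
      ⁅Esub n R (I : Set R), Esub n R (J : Set R)⁆ :=
  (EnI_le_FF hn _).trans (FF_le_comm hn I J)

end Groups

end Petechuk

end Statement1Aux

/-- `E(n,IJ) ⊆ [E_I, E_J]`; in particular `E(n,I²) ⊆ E_I`. -/
theorem statement1 {R : Type*} [Ring R] {n : ℕ} (hn : 3 ≤ n) (I J : TwoSidedIdeal R) :
    EnI n (TwoSidedIdeal.span {x : R | ∃ a ∈ I, ∃ b ∈ J, x = a * b}) ≤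
      ⁅Esub n R (I : Set R), Esub n R (J : Set R)⁆ ∧
    EnI n (TwoSidedIdeal.span {x : R | ∃ a ∈ I, ∃ b ∈ I, x = a * b}) ≤
      Esub n R (I : Set R) := by
  refine ⟨Petechuk.main hn I J, (Petechuk.main hn I I).trans ?_⟩
  refine Subgroup.commutator_le.mpr fun g₁ h₁ g₂ h₂ => ?_
  rw [commutatorElement_def]
  exact mul_mem (mul_mem (mul_mem h₁ h₂) (inv_mem h₁)) (inv_mem h₂)
end

section
/- Suppose R is weakly-commutator of some length k and every quotient ring R/I of R (I a two-sided ideal) is partially normal. Then R is stable. -/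
/- Common definitions: linear groups over an associative ring with identity,
transvections, elementary subgroups, congruence subgroups, and the
stability-theoretic properties of rings, following V. M. Petechuk,
"Stability of rings". Throughout, `GL(n,R)` is realized as the group of
units `(Matrix (Fin n) (Fin n) R)ˣ`. -/

open Matrix

open scoped commutatorElement

namespace PS

open Subgroup Matrix

variable {n : ℕ} {R : Type*} [Ring R]

/-- The transvection `t_{ij}(r)` as a unit. -/
def tv (i j : Fin n) (hij : i ≠ j) (r : R) : (Matrix (Fin n) (Fin n) R)ˣ where
  val := 1 + single i j r
  inv := 1 + single i j (-r)
  val_inv := by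
    have h0 : single i j r * single i j (-r) = 0 :=
      single_mul_single_of_ne _ _ _ _ hij.symm _
    have : (1 + single i j r) * (1 + single i j (-r)) =
        1 + (single i j r + single i j (-r)) +
          single i j r * single i j (-r) := by noncomm_ring
    rw [this, h0, ← single_add, add_neg_cancel, single_zero]
    simp
  inv_val := by
    have h0 : single i j (-r) * single i j r = 0 :=
      single_mul_single_of_ne _ _ _ _ hij.symm _
    have : (1 + single i j (-r)) * (1 + single i j r) =
        1 + (single i j (-r) + single i j r) +
          single i j (-r) * single i j r := by noncomm_ring
    rw [this, h0, ← single_add, neg_add_cancel, single_zero]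
    simp

@[simp] lemma tv_val (i j : Fin n) (hij : i ≠ j) (r : R) :
    (tv i j hij r).val = 1 + single i j r := rfl

lemma tv_mul (i j : Fin n) (hij : i ≠ j) (r s : R) :
    tv i j hij r * tv i j hij s = tv i j hij (r + s) := by
  apply Units.ext
  show (1 + single i j r) * (1 + single i j s) = 1 + single i j (r + s)
  have h0 : single i j r * single i j s = 0 :=
    single_mul_single_of_ne _ _ _ _ hij.symm _
  have : (1 + single i j r) * (1 + single i j s) =
      1 + (single i j r + single i j s) +
        single i j r * single i j s := by noncomm_ring
  rw [this, h0, ← single_add, add_zero]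

@[simp] lemma tv_zero (i j : Fin n) (hij : i ≠ j) : tv i j hij (0 : R) = 1 := by
  apply Units.ext
  show (1 : Matrix (Fin n) (Fin n) R) + single i j 0 = 1
  rw [single_zero, add_zero]

lemma tv_inv (i j : Fin n) (hij : i ≠ j) (r : R) :
    (tv i j hij r)⁻¹ = tv i j hij (-r) :=
  (inv_eq_of_mul_eq_one_right (by rw [tv_mul, add_neg_cancel, tv_zero]))

/-- The Steinberg commutator relation. -/
lemma tv_comm {i j k : Fin n} (hij : i ≠ j) (hjk : j ≠ k) (hik : i ≠ k) (r s : R) :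
    ⁅tv i j hij r, tv j k hjk s⁆ = tv i k hik (r * s) := by
  have key : tv i j hij r * tv j k hjk s =
      tv i k hik (r * s) * (tv j k hjk s * tv i j hij r) := by
    apply Units.ext
    show (1 + single i j r) * (1 + single j k s) =
      (1 + single i k (r * s)) *
        ((1 + single j k s) * (1 + single i j r))
    have hAB : single i j r * single j k s = single i k (r * s) :=
      single_mul_single_same (c := r) _ _ _ _
    have hBA : single j k s * single i j r = 0 :=
      single_mul_single_of_ne _ _ _ _ (Ne.symm hik) _
    have hCA : single i k (r * s) * single i j r = 0 :=
      single_mul_single_of_ne _ _ _ _ (Ne.symm hik) _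
    have hCB : single i k (r * s) * single j k s = 0 :=
      single_mul_single_of_ne _ _ _ _ (Ne.symm hjk) _
    simp only [mul_add, add_mul, one_mul, mul_one, hAB, hBA, hCA, hCB, add_zero, zero_add,
      mul_zero, zero_mul]
    abel
  calc ⁅tv i j hij r, tv j k hjk s⁆
      = (tv i j hij r * tv j k hjk s) * (tv j k hjk s * tv i j hij r)⁻¹ := by group
    _ = (tv i k hik (r * s) * (tv j k hjk s * tv i j hij r)) *
          (tv j k hjk s * tv i j hij r)⁻¹ := by rw [key]
    _ = tv i k hik (r * s) := by group

lemma tv_mem_Esub {X : Set R} {i j : Fin n} (hij : i ≠ j) {r : R} (hr : r ∈ X) :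
    tv i j hij r ∈ Esub n R X :=
  Subgroup.subset_closure ⟨i, j, hij, r, hr, rfl⟩

lemma tv_mem_En {i j : Fin n} (hij : i ≠ j) (r : R) :
    tv i j hij r ∈ En n R :=
  tv_mem_Esub hij (Set.mem_univ r)

/-- A third index distinct from two given ones. -/
lemma exists_third (hn : 3 ≤ n) (i j : Fin n) : ∃ k : Fin n, k ≠ i ∧ k ≠ j := by
  classical
  by_contra h
  push_neg at h
  have hsub : (Finset.univ : Finset (Fin n)) ⊆ {i, j} := by
    intro k _
    by_cases hk : k = i
    · simp [hk]
    · simp [h k hk]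
  have h2 : ({i, j} : Finset (Fin n)).card ≤ 2 :=
    (Finset.card_insert_le _ _).trans (by simp)
  have h3 := (Finset.card_le_card hsub).trans h2
  rw [Finset.card_univ, Fintype.card_fin] at h3
  omega

/-- `G` is invariant under conjugation by `E(n,R)`. -/
def EInv (G : Subgroup (Matrix (Fin n) (Fin n) R)ˣ) : Prop :=
  ∀ e ∈ En n R, ∀ g ∈ G, e * g * e⁻¹ ∈ G

lemma EInv.comm_mem {G : Subgroup (Matrix (Fin n) (Fin n) R)ˣ} (hG : EInv G)
    {g e : (Matrix (Fin n) (Fin n) R)ˣ} (hg : g ∈ G) (he : e ∈ En n R) : ⁅g, e⁆ ∈ G := by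
  have : ⁅g, e⁆ = g * (e * g⁻¹ * e⁻¹) := by group
  rw [this]
  exact mul_mem hg (hG e he g⁻¹ (inv_mem hg))

lemma EInv.comm_mem' {G : Subgroup (Matrix (Fin n) (Fin n) R)ˣ} (hG : EInv G)
    {g e : (Matrix (Fin n) (Fin n) R)ˣ} (he : e ∈ En n R) (hg : g ∈ G) : ⁅e, g⁆ ∈ G := by
  have : ⁅e, g⁆ = (e * g * e⁻¹) * g⁻¹ := by group
  rw [this]
  exact mul_mem (hG e he g hg) (inv_mem hg)

lemma EInv_En : EInv (En n R) :=
  fun e he g hg => mul_mem (mul_mem he hg) (inv_mem he)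

lemma cnI_normal (I : TwoSidedIdeal R) : (CnI n I).Normal :=
  Subgroup.Normal.comap inferInstance _

lemma EInv_CnI (I : TwoSidedIdeal R) : EInv (CnI n (R := R) I) := by
  intro e _ g hg
  exact (cnI_normal I).conj_mem g hg e

lemma EInv.map_conj {G : Subgroup (Matrix (Fin n) (Fin n) R)ˣ} (hG : EInv G)
    {e : (Matrix (Fin n) (Fin n) R)ˣ} (he : e ∈ En n R) :
    G.map (MulAut.conj e).toMonoidHom = G := by
  apply le_antisymm
  · rintro x ⟨g, hg, rfl⟩
    exact hG e he g hg
  · intro g hg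
    refine ⟨e⁻¹ * g * e, ?_, ?_⟩
    · have := hG e⁻¹ (inv_mem he) g hg
      simpa using this
    · show (MulAut.conj e) (e⁻¹ * g * e) = g
      simp [MulAut.conj_apply]
      group

lemma EInv.commutator {G : Subgroup (Matrix (Fin n) (Fin n) R)ˣ} (hG : EInv G) :
    EInv ⁅G, En n R⁆ := by
  intro e he g hg
  have hmap : (⁅G, En n R⁆ : Subgroup _).map (MulAut.conj e).toMonoidHom = ⁅G, En n R⁆ := by
    rw [Subgroup.map_commutator, hG.map_conj he, EInv_En.map_conj he]
  rw [← hmap]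
  exact ⟨g, hg, by simp [MulAut.conj_apply]⟩

lemma iter_EInv (I : TwoSidedIdeal R) :
    ∀ m, EInv (iterCommutator (CnI n I) (En n R) m)
  | 0 => EInv_CnI I
  | m + 1 => (iter_EInv I m).commutator

lemma iter_le_CnI (I : TwoSidedIdeal R) :
    ∀ m, iterCommutator (CnI n I) (En n R) m ≤ CnI n I
  | 0 => le_rfl
  | m + 1 => by
    haveI := cnI_normal (n := n) I
    calc iterCommutator (CnI n I) (En n R) (m + 1)
        = ⁅iterCommutator (CnI n I) (En n R) m, En n R⁆ := rfl
      _ ≤ ⁅CnI n I, En n R⁆ := Subgroup.commutator_mono (iter_le_CnI I m) le_rfl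
      _ ≤ CnI n I := Subgroup.commutator_le_left _ _

end PS

namespace PS

open Subgroup Matrix

variable {n : ℕ} {R : Type*} [Ring R]

/-- One step of the extraction machine: from `t_{ab}(r)·c ∈ G` with `c` in the `m`-th
iterated commutator, produce `t_{a'b'}(r)·c' ∈ G` with `c'` one level deeper. -/
lemma machine_step (hn : 3 ≤ n) {G : Subgroup (Matrix (Fin n) (Fin n) R)ˣ} (hG : EInv G)
    (I : TwoSidedIdeal R) {m : ℕ} {a b : Fin n} (hab : a ≠ b) {r : R}
    {c : (Matrix (Fin n) (Fin n) R)ˣ} (hc : c ∈ iterCommutator (CnI n I) (En n R) m)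
    (hg : tv a b hab r * c ∈ G) :
    ∃ (a' b' : Fin n) (h' : a' ≠ b') (c' : (Matrix (Fin n) (Fin n) R)ˣ),
      c' ∈ iterCommutator (CnI n I) (En n R) (m + 1) ∧ tv a' b' h' r * c' ∈ G := by
  obtain ⟨l, hla, hlb⟩ := exists_third hn a b
  have hbl : b ≠ l := hlb.symm
  have hal : a ≠ l := hla.symm
  set t : (Matrix (Fin n) (Fin n) R)ˣ := tv a b hab r with ht
  set e : (Matrix (Fin n) (Fin n) R)ˣ := tv b l hbl 1 with he
  have he_mem : e ∈ En n R := tv_mem_En hbl 1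
  set t' : (Matrix (Fin n) (Fin n) R)ˣ := tv a l hal r with ht'
  have htt' : ⁅t, e⁆ = t' := by
    rw [ht, he, ht', tv_comm hab hbl hal r 1, mul_one]
  set w : (Matrix (Fin n) (Fin n) R)ˣ := ⁅t, e⁆⁻¹ * t with hw
  have hw_mem : w ∈ En n R := mul_mem (inv_mem (by rw [htt']; exact tv_mem_En hal r))
    (tv_mem_En hab r)
  set c' : (Matrix (Fin n) (Fin n) R)ˣ := w * ⁅c, e⁆ * w⁻¹ with hc'
  have hc'_mem : c' ∈ iterCommutator (CnI n I) (En n R) (m + 1) := by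
    have hce : ⁅c, e⁆ ∈ iterCommutator (CnI n I) (En n R) (m + 1) :=
      Subgroup.commutator_mem_commutator hc he_mem
    exact iter_EInv I (m + 1) w hw_mem _ hce
  have hkey : ⁅t * c, e⁆ = t' * c' := by
    rw [← htt', hc', hw]
    group
  refine ⟨a, l, hal, c', hc'_mem, ?_⟩
  rw [← hkey]
  exact hG.comm_mem hg he_mem

lemma machine (hn : 3 ≤ n) {G : Subgroup (Matrix (Fin n) (Fin n) R)ˣ} (hG : EInv G)
    (I : TwoSidedIdeal R) {r : R} (k : ℕ)
    (h0 : ∃ (a b : Fin n) (hab : a ≠ b) (c : (Matrix (Fin n) (Fin n) R)ˣ),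
      c ∈ iterCommutator (CnI n I) (En n R) 0 ∧ tv a b hab r * c ∈ G) :
    ∃ (a b : Fin n) (hab : a ≠ b) (c : (Matrix (Fin n) (Fin n) R)ˣ),
      c ∈ iterCommutator (CnI n I) (En n R) k ∧ tv a b hab r * c ∈ G := by
  induction k with
  | zero => exact h0
  | succ m ih =>
    obtain ⟨a, b, hab, c, hc, hg⟩ := ih
    exact machine_step hn hG I hab hc hg

/-- If an `E`-invariant subgroup contains one transvection `t_{ab}(r)`, it contains
`t_{a'b'}(r)` for every pair of distinct indices. -/
lemma spread (hn : 3 ≤ n) {G : Subgroup (Matrix (Fin n) (Fin n) R)ˣ} (hG : EInv G)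
    {a b : Fin n} (hab : a ≠ b) {r : R} (h : tv a b hab r ∈ G) :
    ∀ (a' b' : Fin n) (h' : a' ≠ b'), tv a' b' h' r ∈ G := by
  -- step 1: change the column
  have s1 : ∀ {a b : Fin n} (hab : a ≠ b), tv a b hab r ∈ G →
      ∀ {c : Fin n} (hac : a ≠ c), c ≠ b → tv a c hac r ∈ G := by
    intro a b hab hg c hac hcb
    have : tv a c hac r = ⁅tv a b hab r, tv b c (fun hbc => hcb (hbc.symm)) (1:R)⁆ := by
      rw [tv_comm hab _ hac r 1, mul_one]
    rw [this]
    exact hG.comm_mem hg (tv_mem_En _ 1)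
  -- step 2: change the row
  have s2 : ∀ {a b : Fin n} (hab : a ≠ b), tv a b hab r ∈ G →
      ∀ {c : Fin n} (hcb : c ≠ b), c ≠ a → tv c b hcb r ∈ G := by
    intro a b hab hg c hcb hca
    have : tv c b hcb r = ⁅tv c a hca (1:R), tv a b hab r⁆ := by
      rw [tv_comm hca hab hcb (1:R) r, one_mul]
    rw [this]
    exact hG.comm_mem' (tv_mem_En _ 1) hg
  intro a' b' h'
  by_cases ha : a' = a
  · subst ha
    by_cases hb : b' = b
    · subst hb; exact h
    · exact s1 hab h h' hb
  · -- a' ≠ a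
    by_cases hb : b' = a
    · -- target `tv a' a r`
      subst hb
      obtain ⟨c, hca, hca'⟩ := exists_third hn b' a'
      -- get `tv a c r` (c ≠ a, might equal b)
      have hac : b' ≠ c := fun hh => hca hh.symm
      have h1 : tv b' c hac r ∈ G := by
        by_cases hcb : c = b
        · subst hcb; exact h
        · exact s1 hab h hac hcb
      -- move the row to a'
      have h2 : tv a' c (fun hh => hca' hh.symm) r ∈ G :=
        s2 hac h1 (fun hh => hca' hh.symm) ha
      have : tv a' b' h' r = ⁅tv a' c (fun hh => hca' hh.symm) r, tv c b' hca (1:R)⁆ := by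
        rw [tv_comm _ hca h' r 1, mul_one]
      rw [this]
      exact hG.comm_mem h2 (tv_mem_En _ 1)
    · -- b' ≠ a, a' ≠ a
      have h1 : tv a b' (fun hh => hb hh.symm) r ∈ G := by
        by_cases hbb : b' = b
        · subst hbb; exact h
        · exact s1 hab h _ hbb
      exact s2 _ h1 h' ha

/-- `E(n,R)` is perfect for `n ≥ 3`. -/
lemma En_perfect (hn : 3 ≤ n) : ⁅(En n R : Subgroup _), En n R⁆ = En n R := by
  apply le_antisymm
  · rw [Subgroup.commutator_le]
    intro g hg e he
    exact mul_mem (mul_mem (mul_mem hg he) (inv_mem hg)) (inv_mem he)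
  · rw [En, Esub]
    apply Subgroup.closure_le _ |>.mpr
    rintro g ⟨i, j, hij, x, -, hx⟩
    have hg : g = tv i j hij x := Units.ext hx
    obtain ⟨c, hci, hcj⟩ := exists_third hn i j
    have : tv i j hij x = ⁅tv i c (fun hh => hci hh.symm) x, tv c j hcj (1:R)⁆ := by
      rw [tv_comm _ hcj hij x 1, mul_one]
    rw [hg, this]
    exact Subgroup.commutator_mem_commutator (tv_mem_En _ x) (tv_mem_En _ 1)

end PS

namespace PS

open Subgroup Matrix

variable {n : ℕ} {R : Type*} [Ring R]

/-- The level ideal of an `E`-invariant subgroup: all `r` such that every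
transvection with parameter `r` lies in `G`. -/
def level (hn : 3 ≤ n) (G : Subgroup (Matrix (Fin n) (Fin n) R)ˣ) (hG : EInv G) :
    TwoSidedIdeal R :=
  TwoSidedIdeal.mk' {r : R | ∀ (a b : Fin n) (hab : a ≠ b), tv a b hab r ∈ G}
    (fun a b hab => by rw [tv_zero]; exact one_mem G)
    (fun {x y} hx hy a b hab => by rw [← tv_mul]; exact mul_mem (hx a b hab) (hy a b hab))
    (fun {x} hx a b hab => by rw [← tv_inv]; exact inv_mem (hx a b hab))
    (fun {x y} hy a b hab => by
      obtain ⟨c, hca, hcb⟩ := exists_third hn a b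
      have hac : a ≠ c := fun h => hca h.symm
      have h1 : tv a b hab (x * y) = ⁅tv a c hac x, tv c b hcb y⁆ :=
        (tv_comm hac hcb hab x y).symm
      rw [h1]
      exact hG.comm_mem' (tv_mem_En hac x) (hy c b hcb))
    (fun {x y} hx a b hab => by
      obtain ⟨c, hca, hcb⟩ := exists_third hn a b
      have hac : a ≠ c := fun h => hca h.symm
      have h1 : tv a b hab (x * y) = ⁅tv a c hac x, tv c b hcb y⁆ :=
        (tv_comm hac hcb hab x y).symm
      rw [h1]
      exact hG.comm_mem (hx a c hac) (tv_mem_En hcb y))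

lemma mem_level {hn : 3 ≤ n} {G : Subgroup (Matrix (Fin n) (Fin n) R)ˣ} {hG : EInv G}
    {r : R} : r ∈ level hn G hG ↔ ∀ (a b : Fin n) (hab : a ≠ b), tv a b hab r ∈ G :=
  TwoSidedIdeal.mem_mk' _ _ _ _ _ _ r

lemma EnI_le {G : Subgroup (Matrix (Fin n) (Fin n) R)ˣ} (hG : EInv G)
    {I : TwoSidedIdeal R} (hsub : Esub n R (I : Set R) ≤ G) : EnI n I ≤ G := by
  rw [EnI]
  apply (Subgroup.closure_le _).mpr
  rintro g ⟨h, hh, e, he, rfl⟩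
  exact hG h hh e (hsub he)

lemma EnI_level_le (hn : 3 ≤ n) {G : Subgroup (Matrix (Fin n) (Fin n) R)ˣ} (hG : EInv G) :
    EnI n (level hn G hG) ≤ G := by
  apply EnI_le hG
  apply (Subgroup.closure_le _).mpr
  rintro g ⟨i, j, hij, x, hx, hval⟩
  have : g = tv i j hij x := Units.ext hval
  rw [this]
  exact (mem_level.mp (SetLike.mem_coe.mp hx)) i j hij

lemma map_std {S : Type*} [Ring S] (f : R →+* S) (i j : Fin n) (r : R) :
    (RingHom.mapMatrix f) (single i j r) = single i j (f r) := by
  ext a b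
  simp [single, RingHom.mapMatrix_apply, Matrix.map_apply, apply_ite f]

lemma lam_tv (I : TwoSidedIdeal R) (i j : Fin n) (hij : i ≠ j) (r : R) :
    lamI n I (tv i j hij r) = tv i j hij (RingCon.mk' I.ringCon r) := by
  apply Units.ext
  show (RingHom.mapMatrix (RingCon.mk' I.ringCon)) (1 + single i j r)
      = 1 + single i j (RingCon.mk' I.ringCon r)
  rw [map_add, _root_.map_one, map_std]

/-- Hall–Witt style descent: if `K` is perfect and `⁅⁅X,K⁆,K⁆ ≤ N` for a normal `N`,
then `⁅X,K⁆ ≤ N`. -/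
lemma hw {G : Type*} [Group G] {X K N : Subgroup G} [hN : N.Normal] (hK : ⁅K, K⁆ = K)
    (h : ⁅⁅X, K⁆, K⁆ ≤ N) : ⁅X, K⁆ ≤ N := by
  set π := QuotientGroup.mk' N with hπ
  have h2 : ⁅⁅X.map π, K.map π⁆, K.map π⁆ = ⊥ := by
    rw [← Subgroup.map_commutator, ← Subgroup.map_commutator, Subgroup.map_eq_bot_iff,
      QuotientGroup.ker_mk']
    exact h
  have h3 : ⁅⁅K.map π, X.map π⁆, K.map π⁆ = ⊥ := by
    rwa [Subgroup.commutator_comm (K.map π) (X.map π)]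
  have h4 : ⁅⁅K.map π, K.map π⁆, X.map π⁆ = ⊥ :=
    Subgroup.commutator_commutator_eq_bot_of_rotate h3 h2
  rw [← Subgroup.map_commutator, hK, Subgroup.commutator_comm, ← Subgroup.map_commutator,
    Subgroup.map_eq_bot_iff, QuotientGroup.ker_mk'] at h4
  exact h4

lemma iterCommutator_succ {G : Type*} [Group G] (H K : Subgroup G) (m : ℕ) :
    iterCommutator H K (m + 1) = ⁅iterCommutator H K m, K⁆ := rfl

/-- Downward induction: if the `(j+1)`-st iterated commutator is inside `EnI`,
so is the first. -/
lemma down (hn : 3 ≤ n) (I : TwoSidedIdeal R) [hN : (EnI n I).Normal] :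
    ∀ j : ℕ, iterCommutator (CnI n I) (En n R) (j + 1) ≤ EnI n I →
      iterCommutator (CnI n I) (En n R) 1 ≤ EnI n I := by
  intro j
  induction j with
  | zero => exact id
  | succ m ih =>
    intro hm
    apply ih
    rw [iterCommutator_succ]
    rw [iterCommutator_succ, iterCommutator_succ] at hm
    exact hw (En_perfect hn) hm

end PS

/-- a weakly-commutator ring all of whose quotient rings are
partially normal is stable. -/
theorem statement2 {R : Type*} [Ring R] {n : ℕ} (hn : 3 ≤ n) (k : ℕ)
    (hwc : IsWeaklyCommutatorRing n R k)
    (hpn : ∀ I : TwoSidedIdeal R, IsPartiallyNormalRing n I.ringCon.Quotient) :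
    IsStableRing n R := by
  obtain ⟨hk, hI⟩ := hwc
  obtain ⟨k', rfl⟩ : ∃ k', k = k' + 1 := ⟨k - 1, by omega⟩
  constructor
  · -- commutator ring
    intro I
    obtain ⟨hiter, hnorm⟩ := hI I
    haveI := hnorm
    refine ⟨le_antisymm ?_ ?_, hnorm⟩
    · -- ⁅C(n,I), E(n,R)⁆ ≤ E(n,I)
      have h1 : iterCommutator (CnI n I) (En n R) 1 ≤ EnI n I :=
        PS.down hn I k' (le_of_eq hiter)
      rw [PS.iterCommutator_succ] at h1
      exact h1
    · -- E(n,I) ≤ ⁅C(n,I), E(n,R)⁆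
      calc EnI n I = iterCommutator (CnI n I) (En n R) (k' + 1) := hiter.symm
        _ = ⁅iterCommutator (CnI n I) (En n R) k', En n R⁆ := rfl
        _ ≤ ⁅CnI n I, En n R⁆ :=
            Subgroup.commutator_mono (PS.iter_le_CnI I k') le_rfl
  · -- normal ring
    intro G hGE
    have hG : PS.EInv G := hGE
    set I := PS.level hn G hG with hIdef
    refine ⟨I, PS.EnI_level_le hn hG, ?_⟩
    set N := G.map (lamI n I) with hNdef
    -- N is invariant under conjugation by E(n, R/I)
    have hNinv : ∀ e ∈ En n I.ringCon.Quotient, ∀ g ∈ N, e * g * e⁻¹ ∈ N := by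
      have key : ∀ e ∈ En n I.ringCon.Quotient,
          ∀ g ∈ N, e * g * e⁻¹ ∈ N ∧ e⁻¹ * g * e ∈ N := by
        intro e he
        refine Subgroup.closure_induction
          (p := fun x _ => ∀ g ∈ N, x * g * x⁻¹ ∈ N ∧ x⁻¹ * g * x ∈ N)
          ?_ ?_ ?_ ?_ he
        · rintro x ⟨i, j, hij, xq, -, hval⟩ g hgN
          have hx : x = PS.tv i j hij xq := Units.ext hval
          obtain ⟨rr, hrr⟩ : ∃ r : R, RingCon.mk' I.ringCon r = xq :=
            ⟨xq.out, Quotient.out_eq xq⟩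
          obtain ⟨g0, hg0, rfl⟩ := hgN
          have hlam : lamI n I (PS.tv i j hij rr) = x := by
            rw [PS.lam_tv, hrr, hx]
          constructor
          · refine ⟨PS.tv i j hij rr * g0 * (PS.tv i j hij rr)⁻¹,
              hG _ (PS.tv_mem_En hij rr) g0 hg0, ?_⟩
            rw [_root_.map_mul, _root_.map_mul, map_inv, hlam]
          · refine ⟨(PS.tv i j hij rr)⁻¹ * g0 * PS.tv i j hij rr,
              ?_, ?_⟩
            · have := hG _ (inv_mem (PS.tv_mem_En hij rr)) g0 hg0
              simpa using this
            · rw [_root_.map_mul, _root_.map_mul, map_inv, hlam]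
        · intro g hg
          simpa using hg
        · intro x y hx hy px py g hg
          constructor
          · have h1 := (px _ ((py g hg).1)).1
            have : x * (y * g * y⁻¹) * x⁻¹ = (x * y) * g * (x * y)⁻¹ := by group
            rwa [this] at h1
          · have h1 := (py _ ((px g hg).2)).2
            have : y⁻¹ * (x⁻¹ * g * x) * y = (x * y)⁻¹ * g * (x * y) := by group
            rwa [this] at h1
        · intro x hx px g hg
          constructor
          · have h1 := (px g hg).2
            have : x⁻¹ * g * x = x⁻¹ * g * (x⁻¹)⁻¹ := by group
            rwa [this] at h1
          · have h1 := (px g hg).1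
            have : x * g * x⁻¹ = (x⁻¹)⁻¹ * g * x⁻¹ := by group
            rwa [this] at h1
      intro e he g hg
      exact (key e he g hg).1
    -- N contains no non-identity transvection
    have hNtv : ∀ g ∈ N, IsTransvection g → g = 1 := by
      rintro gq hgq ⟨i, j, hij, xq, hval⟩
      obtain ⟨g0, hg0, rfl⟩ := hgq
      obtain ⟨rr, hrr⟩ : ∃ r : R, RingCon.mk' I.ringCon r = xq :=
        ⟨xq.out, Quotient.out_eq xq⟩
      have hgtv : lamI n I g0 = PS.tv i j hij xq := Units.ext hval
      set c : (Matrix (Fin n) (Fin n) R)ˣ := (PS.tv i j hij rr)⁻¹ * g0 with hcdef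
      have hc0 : c ∈ iterCommutator (CnI n I) (En n R) 0 := by
        show c ∈ CnI n I
        have hlamc : lamI n I c = 1 := by
          rw [hcdef, _root_.map_mul, map_inv, PS.lam_tv, hrr, hgtv]
          group
        show lamI n I c ∈ Subgroup.center _
        rw [hlamc]
        exact one_mem _
      have hstart : PS.tv i j hij rr * c ∈ G := by
        have : PS.tv i j hij rr * c = g0 := by rw [hcdef]; group
        rw [this]; exact hg0
      obtain ⟨a, b, hab, c', hc', hgc⟩ :=
        PS.machine hn hG I (k' + 1) ⟨i, j, hij, c, hc0, hstart⟩
      have hc'G : c' ∈ G := by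
        have h1 : c' ∈ EnI n I := by rw [← (hI I).1]; exact hc'
        exact PS.EnI_level_le hn hG h1
      have htvG : PS.tv a b hab rr ∈ G := by
        have := mul_mem hgc (inv_mem hc'G)
        rwa [mul_inv_cancel_right] at this
      have hrI : rr ∈ I := PS.mem_level.mpr (PS.spread hn hG hab htvG)
      have hx0 : xq = 0 := by
        rw [← hrr]
        calc RingCon.mk' I.ringCon rr = RingCon.mk' I.ringCon 0 :=
              (RingCon.eq _).mpr ((TwoSidedIdeal.mem_iff I rr).mp hrI)
          _ = 0 := map_zero _
      rw [hgtv, hx0, PS.tv_zero]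
    have hcen := hpn I N hNinv hNtv
    intro g hg
    exact Subgroup.mem_comap.mpr (hcen (Subgroup.mem_map_of_mem _ hg))
end

section
/- Suppose R is weakly-commutator of some length k and normal. Then R is stable. -/
/- Common definitions: linear groups over an associative ring with identity,
transvections, elementary subgroups, congruence subgroups, and the
stability-theoretic properties of rings, following V. M. Petechuk,
"Stability of rings". Throughout, `GL(n,R)` is realized as the group of
units `(Matrix (Fin n) (Fin n) R)ˣ`. -/

open Matrix

open scoped commutatorElement


section Aux

variable {n : ℕ} {R : Type*} [Ring R]

lemma sq_zero_mul {A : Type*} [Ring A] {a : A} (h : a * a = 0) : (1 + a) * (1 - a) = 1 := by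
  rw [mul_sub, mul_one, add_mul, one_mul, h, add_zero]; abel

lemma sq_zero_mul' {A : Type*} [Ring A] {a : A} (h : a * a = 0) : (1 - a) * (1 + a) = 1 := by
  rw [sub_mul, one_mul, mul_add, mul_one, h, add_zero]; abel

/-- The transvection `1 + r e_{ij}` as a unit. -/
def tu {i j : Fin n} (hij : i ≠ j) (r : R) : (Matrix (Fin n) (Fin n) R)ˣ where
  val := 1 + single i j r
  inv := 1 - single i j r
  val_inv := sq_zero_mul (Matrix.single_mul_single_of_ne (c := r) i j i hij.symm r)
  inv_val := sq_zero_mul' (Matrix.single_mul_single_of_ne (c := r) i j i hij.symm r)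

lemma comm_formula {A : Type*} [Ring A] {p q : A} (hp : p * p = 0) (hq : q * q = 0)
    (hqp : q * p = 0) : (1 + p) * (1 + q) * ((1 - p) * (1 - q)) = 1 + p * q := by
  have e1 : (1 + p) * (1 + q) = 1 + p + q + p * q := by noncomm_ring
  have e2 : (1 - p) * (1 - q) = 1 - p - q + p * q := by noncomm_ring
  have h1 : p * q * p = 0 := by rw [mul_assoc, hqp, mul_zero]
  have h2 : p * q * q = 0 := by rw [mul_assoc, hq, mul_zero]
  rw [e1, e2]
  simp only [mul_add, add_mul, mul_sub, sub_mul, mul_one, one_mul, hp, hq, hqp, ← mul_assoc,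
    h1, h2]
  simp only [zero_mul, mul_zero]
  abel

lemma tu_commutator {i l j : Fin n} (hil : i ≠ l) (hlj : l ≠ j) (hij : i ≠ j) (x : R) :
    ⁅tu hil x, tu hlj (1 : R)⁆ = tu hij x := by
  have hp : single i l x * single i l x = 0 :=
    Matrix.single_mul_single_of_ne (c := x) i l i hil.symm x
  have hq : single l j (1:R) * single l j (1:R) = 0 :=
    Matrix.single_mul_single_of_ne (c := (1:R)) l j l hlj.symm 1
  have hqp : single l j (1:R) * single i l x = 0 :=
    Matrix.single_mul_single_of_ne (c := (1:R)) l j i (Ne.symm hij) x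
  apply Units.ext
  rw [commutatorElement_def]
  simp only [Units.val_mul]
  have i1 : ((tu hil x)⁻¹).val = 1 - single i l x := rfl
  have i2 : ((tu hlj (1:R))⁻¹).val = 1 - single l j 1 := rfl
  have v1 : (tu hil x).val = 1 + single i l x := rfl
  have v2 : (tu hlj (1:R)).val = 1 + single l j 1 := rfl
  have v3 : (tu hij x).val = 1 + single i j x := rfl
  rw [i1, i2, v1, v2, v3, mul_assoc ((1 + single i l x) * (1 + single l j 1))]
  rw [comm_formula hp hq hqp, Matrix.single_mul_single_same, mul_one]

end Aux

section GroupLemmas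

variable {n : ℕ} {R : Type*} [Ring R]

lemma tu_mem_Esub {X : Set R} {i j : Fin n} (hij : i ≠ j) {x : R} (hx : x ∈ X) :
    tu hij x ∈ Esub n R X :=
  Subgroup.subset_closure ⟨i, j, hij, x, hx, rfl⟩

lemma tu_mem_En {i j : Fin n} (hij : i ≠ j) (x : R) : tu hij x ∈ En n R :=
  tu_mem_Esub hij (Set.mem_univ x)

lemma exists_third (hn : 3 ≤ n) (i j : Fin n) : ∃ l : Fin n, l ≠ i ∧ l ≠ j := by
  by_contra h
  push_neg at h
  have hsub : (Finset.univ : Finset (Fin n)) ⊆ {i, j} := by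
    intro l _
    rcases eq_or_ne l i with rfl | hli
    · simp
    · simp [h l hli]
  have h1 := Finset.card_le_card hsub
  have h2 : ({i, j} : Finset (Fin n)).card ≤ 2 :=
    (Finset.card_insert_le _ _).trans (by simp)
  rw [Finset.card_univ, Fintype.card_fin] at h1
  omega

lemma En_perfect (hn : 3 ≤ n) : ⁅En n R, En n R⁆ = En n R := by
  apply le_antisymm
  · rw [Subgroup.commutator_le]
    intro g hg h hh
    rw [commutatorElement_def]
    exact mul_mem (mul_mem (mul_mem hg hh) (inv_mem hg)) (inv_mem hh)
  · rw [En, Esub, Subgroup.closure_le]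
    rintro g ⟨i, j, hij, x, -, hval⟩
    obtain ⟨l, hli, hlj⟩ := exists_third hn i j
    have hg : g = tu hij x := Units.ext hval
    rw [SetLike.mem_coe, hg, ← tu_commutator (Ne.symm hli) hlj hij x]
    exact Subgroup.commutator_mem_commutator (tu_mem_En _ _) (tu_mem_En _ _)

lemma comm_CnI_le (I : TwoSidedIdeal R) (K : Subgroup (Matrix (Fin n) (Fin n) R)ˣ) :
    ⁅CnI n I, K⁆ ≤ CnI n I := by
  rw [Subgroup.commutator_le]
  intro c hc e he
  rw [CnI, Subgroup.mem_comap] at hc ⊢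
  rw [map_commutatorElement]
  have h1 : ⁅lamI n I c, lamI n I e⁆ = 1 :=
    commutatorElement_eq_one_iff_commute.mpr ((Subgroup.mem_center_iff.mp hc (lamI n I e)).symm)
  rw [h1]
  exact Subgroup.one_mem _

lemma iter_le_CnI (I : TwoSidedIdeal R) :
    ∀ m, iterCommutator (CnI n I) (En n R) m ≤ CnI n I
  | 0 => le_rfl
  | m + 1 => (Subgroup.commutator_mono (iter_le_CnI I m) le_rfl).trans (comm_CnI_le I _)

lemma iter_le_one (I : TwoSidedIdeal R) :
    ∀ m, iterCommutator (CnI n I) (En n R) (m + 1) ≤ ⁅CnI n I, En n R⁆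
  | 0 => le_rfl
  | m + 1 => Subgroup.commutator_mono (iter_le_CnI I (m + 1)) le_rfl

lemma map_iterCommutator {G G' : Type*} [Group G] [Group G'] (f : G →* G') (H K : Subgroup G) :
    ∀ m, (iterCommutator H K m).map f = iterCommutator (H.map f) (K.map f) m
  | 0 => rfl
  | m + 1 => by
    show (⁅iterCommutator H K m, K⁆).map f = ⁅iterCommutator (H.map f) (K.map f) m, K.map f⁆
    rw [Subgroup.map_commutator, map_iterCommutator f H K m]

lemma descent {G : Type*} [Group G] {H K : Subgroup G} (hK : ⁅K, K⁆ = K) :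
    ∀ m, iterCommutator H K (m + 1) = ⊥ → ⁅H, K⁆ = ⊥
  | 0, h => h
  | m + 1, h => by
    apply descent hK m
    set A := iterCommutator H K m with hA
    have h' : ⁅⁅A, K⁆, K⁆ = ⊥ := h
    have h2 : ⁅⁅K, A⁆, K⁆ = ⊥ := by rwa [Subgroup.commutator_comm K A]
    have h3 : ⁅⁅K, K⁆, A⁆ = ⊥ := Subgroup.commutator_commutator_eq_bot_of_rotate h2 h'
    rw [hK] at h3
    show ⁅A, K⁆ = ⊥
    rw [Subgroup.commutator_comm]
    exact h3

end GroupLemmas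

/-- a weakly-commutator normal ring is stable. -/
theorem statement3 {R : Type*} [Ring R] {n : ℕ} (hn : 3 ≤ n) (k : ℕ)
    (hwc : IsWeaklyCommutatorRing n R k)
    (hnorm : IsNormalRing n R) :
    IsStableRing n R := by
  obtain ⟨hk, hI⟩ := hwc
  obtain ⟨m, rfl⟩ : ∃ m, k = m + 1 := ⟨k - 1, by omega⟩
  constructor
  · intro I
    obtain ⟨hiter, hnormal⟩ := hI I
    haveI := hnormal
    refine ⟨le_antisymm ?_ ?_, hnormal⟩
    · set φ := QuotientGroup.mk' (EnI n I) with hφ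
      have hker : φ.ker = EnI n I := QuotientGroup.ker_mk' _
      have h1 : iterCommutator ((CnI n I).map φ) ((En n R).map φ) (m + 1) = ⊥ := by
        rw [← map_iterCommutator, hiter, Subgroup.map_eq_bot_iff, hker]
      have h2 : ⁅(En n R).map φ, (En n R).map φ⁆ = (En n R).map φ := by
        rw [← Subgroup.map_commutator, En_perfect hn]
      have h3 := descent h2 m h1
      rwa [← Subgroup.map_commutator, Subgroup.map_eq_bot_iff, hker] at h3
    · rw [← hiter]
      exact iter_le_one I m
  · exact hnorm
end
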